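/- Let G be an abelian group and H a subgroup of G. If H admits a Hausdorff group topology with non-trivial finite von Neumann radical, then G admits a Hausdorff group topology with non-trivial finite von Neumann radical (namely, the topology on G in which H with its given topology is an open subgroup). -/

import Mathlib

open Filter Set Topology Pointwise


/-- The von Neumann radical of a topological abelian group: the intersection of the
kernels of all continuous characters into the circle group `ℝ/ℤ`. -/
noncomputable def vonNeumannRadical (G : Type*) [AddCommGroup G] [TopologicalSpace G] :
    AddSubgroup G :=
  ⨅ χ : ContinuousAddMonoidHom G (AddCircle (1 : ℝ)), χ.toAddMonoidHom.ker




lemma mem_vonNeumannRadical {G : Type*} [AddCommGroup G] [TopologicalSpace G] {x : G} :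
    x ∈ vonNeumannRadical G ↔
      ∀ χ : ContinuousAddMonoidHom G (AddCircle (1 : ℝ)), χ x = 0 := by
  simp [vonNeumannRadical, AddSubgroup.mem_iInf, AddMonoidHom.mem_ker]

noncomputable def ratToRealCircle : AddCircle (1 : ℚ) →+ AddCircle (1 : ℝ) :=
  QuotientAddGroup.map _ _ (Rat.castHom ℝ).toAddMonoidHom (by
    rintro x ⟨n, rfl⟩
    exact ⟨n, by push_cast; simp⟩)

lemma ratToRealCircle_injective : Function.Injective ratToRealCircle := by
  rw [injective_iff_map_eq_zero]
  intro x hx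
  induction x using QuotientAddGroup.induction_on with
  | H q =>
    rw [show ((q : AddCircle (1:ℚ))) = QuotientAddGroup.mk q from rfl] at hx ⊢
    rw [ratToRealCircle, QuotientAddGroup.map_mk, QuotientAddGroup.eq_zero_iff] at hx
    obtain ⟨n, hn⟩ := hx
    rw [QuotientAddGroup.eq_zero_iff]
    refine ⟨n, ?_⟩
    have : ((n • (1:ℚ) : ℚ) : ℝ) = ((q : ℚ) : ℝ) := by
      push_cast; simpa using hn
    exact_mod_cast this

lemma exists_real_character {A : Type*} [AddCommGroup A] {a : A} (ha : a ≠ 0) :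
    ∃ c : A →+ AddCircle (1 : ℝ), c a ≠ 0 := by
  obtain ⟨c, hc⟩ := CharacterModule.exists_character_apply_ne_zero_of_ne_zero ha
  refine ⟨ratToRealCircle.comp c, fun h => hc ?_⟩
  have := ratToRealCircle_injective (a₁ := c a) (a₂ := 0) (by rw [map_zero]; exact h)
  simpa using this

theorem aux {G : Type*} [AddCommGroup G] (H : AddSubgroup G) [TopologicalSpace H]
    [IsTopologicalAddGroup H] [T2Space H]
    (hne : vonNeumannRadical H ≠ ⊥) (hfin : (vonNeumannRadical H : Set H).Finite) :
    ∃ τ : TopologicalSpace G, @IsTopologicalAddGroup G τ _ ∧ @T2Space G τ ∧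
      @vonNeumannRadical G _ τ ≠ ⊥ ∧ (@vonNeumannRadical G _ τ : Set G).Finite := by
  classical
  set ι : H → G := Subtype.val with hι
  have ιinj : Function.Injective ι := Subtype.val_injective
  let B : AddGroupFilterBasis G := addGroupFilterBasisOfComm
    {U : Set G | ∃ V ∈ 𝓝 (0 : H), U = ι '' V}
    ⟨ι '' univ, univ, univ_mem, rfl⟩
    (fun x y hx hy => by
      obtain ⟨V, hV, rfl⟩ := hx
      obtain ⟨W, hW, rfl⟩ := hy
      refine ⟨ι '' (V ∩ W), ⟨V ∩ W, inter_mem hV hW, rfl⟩, ?_⟩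
      rw [image_inter ιinj])
    (fun U hU => by
      obtain ⟨V, hV, rfl⟩ := hU
      exact ⟨0, mem_of_mem_nhds hV, rfl⟩)
    (fun U hU => by
      obtain ⟨V, hV, rfl⟩ := hU
      obtain ⟨W, hW, hWV⟩ : ∃ W ∈ 𝓝 (0 : H), W + W ⊆ V := by
        have h2 : Tendsto (fun p : H × H => p.1 + p.2) (𝓝 ((0 : H), (0 : H))) (𝓝 0) := by
          simpa using (continuous_add.tendsto ((0 : H), (0 : H)))
        obtain ⟨W1, hW1, W2, hW2, hadd⟩ := mem_nhds_prod_iff.1 (h2 hV)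
        refine ⟨W1 ∩ W2, inter_mem hW1 hW2, ?_⟩
        rintro x ⟨a, ha, b, hb, rfl⟩
        exact hadd (Set.mk_mem_prod ha.1 hb.2)
      refine ⟨ι '' W, ⟨W, hW, rfl⟩, ?_⟩
      rintro x ⟨a, ⟨a1, ha1, rfl⟩, b, ⟨b1, hb1, rfl⟩, rfl⟩
      exact ⟨a1 + b1, hWV ⟨a1, ha1, b1, hb1, rfl⟩, rfl⟩)
    (fun U hU => by
      obtain ⟨V, hV, rfl⟩ := hU
      refine ⟨ι '' ((fun x : H => -x) ⁻¹' V), ⟨_, (continuous_neg.tendsto' (0:H) 0 neg_zero) hV, rfl⟩, ?_⟩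
      rintro x ⟨a, ha, rfl⟩
      exact ⟨-a, ha, rfl⟩)
  letI τG : TopologicalSpace G := B.topology
  haveI : IsTopologicalAddGroup G := B.isTopologicalAddGroup
  have hmemB : ∀ U : Set G, U ∈ B ↔ ∃ V ∈ 𝓝 (0 : H), U = ι '' V := fun U => Iff.rfl
  have hnhds0 : 𝓝 (0 : G) = Filter.map ι (𝓝 (0 : H)) := by
    rw [B.nhds_zero_eq]
    ext S
    rw [FilterBasis.mem_filter_iff, mem_map]
    constructor
    · rintro ⟨U, hU, hsub⟩
      obtain ⟨V, hV, rfl⟩ := (hmemB U).1 hU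
      exact mem_of_superset hV (fun h hh => hsub ⟨h, hh, rfl⟩)
    · intro hS
      exact ⟨ι '' (ι ⁻¹' S), (hmemB _).2 ⟨_, hS, rfl⟩, image_preimage_subset ι S⟩
  have hnhds : ∀ a : H, 𝓝 (ι a) = Filter.map ι (𝓝 a) := by
    intro a
    rw [← map_add_left_nhds_zero (ι a), hnhds0, Filter.map_map,
        ← map_add_left_nhds_zero a, Filter.map_map]
    rfl
  have ιcont : Continuous ι := continuous_iff_continuousAt.2 fun a => by
    unfold ContinuousAt
    rw [hnhds a]
    exact Filter.tendsto_map
  have hHopen : IsOpen (H : Set G) := by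
    apply AddSubgroup.isOpen_of_mem_nhds (g := (0 : G))
    rw [hnhds0]
    exact Filter.mem_map.2 (univ_mem' fun h => h.2)
  haveI hT2 : T2Space G := by
    apply IsTopologicalAddGroup.t2Space_of_zero_sep
    intro x hx
    by_cases hxH : x ∈ H
    · refine ⟨ι '' ({(⟨x, hxH⟩ : H)}ᶜ), ?_, ?_⟩
      · rw [hnhds0]
        exact image_mem_map (compl_singleton_mem_nhds (fun h => hx (by simpa [hι] using congrArg ι h.symm)))
      · rintro ⟨b, hb, hbx⟩
        exact hb (ιinj hbx)
    · refine ⟨ι '' univ, ?_, ?_⟩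
      · rw [hnhds0]; exact image_mem_map univ_mem
      · rintro ⟨b, -, rfl⟩
        exact hxH b.2
  have hsub : ∀ a : H, a ∈ vonNeumannRadical H → ι a ∈ vonNeumannRadical G := by
    intro a ha
    rw [mem_vonNeumannRadical] at ha ⊢
    intro χ
    exact ha ⟨χ.toAddMonoidHom.comp H.subtype, χ.continuous.comp ιcont⟩
  have hradne : vonNeumannRadical G ≠ ⊥ := by
    obtain ⟨⟨a, haH⟩, ha0⟩ := AddSubgroup.ne_bot_iff_exists_ne_zero.1 hne
    intro hbot
    have h1 : ι a ∈ vonNeumannRadical G := hsub a haH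
    rw [hbot, AddSubgroup.mem_bot] at h1
    exact ha0 (Subtype.ext (Subtype.ext h1))
  have hsubset : (vonNeumannRadical G : Set G) ⊆ ι '' (vonNeumannRadical H : Set H) := by
    intro g hg
    rw [SetLike.mem_coe, mem_vonNeumannRadical] at hg
    have hgH : g ∈ H := by
      by_contra hgH
      have hq : (QuotientAddGroup.mk g : G ⧸ H) ≠ 0 := by
        simpa [QuotientAddGroup.eq_zero_iff] using hgH
      obtain ⟨c, hc⟩ := exists_real_character hq
      set χ0 : G →+ AddCircle (1 : ℝ) := c.comp (QuotientAddGroup.mk' H) with hχ0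
      have hker : ∀ h : H, χ0 (ι h) = 0 := by
        intro h
        have : (QuotientAddGroup.mk (ι h) : G ⧸ H) = 0 :=
          (QuotientAddGroup.eq_zero_iff _).2 h.2
        simp [hχ0, QuotientAddGroup.mk'_apply, this]
      have hcont : Continuous χ0 := by
        apply continuous_of_continuousAt_zero χ0
        have hev : χ0 =ᶠ[𝓝 (0 : G)] fun _ => 0 := by
          rw [hnhds0]
          exact eventually_map.2 (Eventually.of_forall hker)
        exact continuousAt_const.congr hev.symm
      have h1 : χ0 g = 0 := hg ⟨χ0, hcont⟩
      exact hc (by simpa [hχ0] using h1)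
    refine ⟨⟨g, hgH⟩, ?_, rfl⟩
    rw [SetLike.mem_coe, mem_vonNeumannRadical]
    intro ψ
    obtain ⟨Ψ, hΨ⟩ := (Module.Baer.of_divisible
      (AddCircle (1 : ℝ))).extension_property_addMonoidHom H.subtype Subtype.val_injective
      ψ.toAddMonoidHom
    have hΨι : ∀ h : H, Ψ (ι h) = ψ h := fun h => DFunLike.congr_fun hΨ h
    have hΨcont : Continuous Ψ := by
      apply continuous_of_continuousAt_zero Ψ
      unfold ContinuousAt
      rw [hnhds0, map_zero, Filter.tendsto_map'_iff]
      have heq : (Ψ ∘ ι) = fun h => ψ h := funext hΨι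
      rw [heq]
      simpa using ψ.continuous.tendsto 0
    have h1 : Ψ g = 0 := hg ⟨Ψ, hΨcont⟩
    exact (hΨι ⟨g, hgH⟩).symm.trans h1
  exact ⟨τG, inferInstance, hT2, hradne, (hfin.image ι).subset hsubset⟩

/-- If a subgroup `H` of an abelian group `G` admits a Hausdorff group topology with
non-trivial finite von Neumann radical, then so does `G`. -/
theorem statement5 (G : Type*) [AddCommGroup G] (H : AddSubgroup G)
    (hH : ∃ τ : TopologicalSpace H, @IsTopologicalAddGroup H τ _ ∧ @T2Space H τ ∧
        @vonNeumannRadical H _ τ ≠ ⊥ ∧ (@vonNeumannRadical H _ τ : Set H).Finite) :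
    ∃ τ : TopologicalSpace G, @IsTopologicalAddGroup G τ _ ∧ @T2Space G τ ∧
      @vonNeumannRadical G _ τ ≠ ⊥ ∧ (@vonNeumannRadical G _ τ : Set G).Finite := by
  obtain ⟨τ, h1, h2, h3, h4⟩ := hH
  letI := τ
  haveI := h1
  haveI := h2
  exact aux H h3 h4
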